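/- Let U ⊆ ℂ be open, let f : U → ℂ be holomorphic, and let K ⊆ U be compact. Then there exists a constant C > 0 such that for all u, v ∈ K, |(f(u) − f(v))² − (u − v)²·f'(u)·f'(v)| ≤ C·|u − v|⁴. -/

import Mathlib

theorem stmt13 (U : Set ℂ) (hU : IsOpen U) (f : ℂ → ℂ)
    (hf : ∀ z ∈ U, DifferentiableAt ℂ f z)
    (K : Set ℂ) (hK : IsCompact K) (hKU : K ⊆ U) :
    ∃ C > (0 : ℝ), ∀ u ∈ K, ∀ v ∈ K,
      ‖(f u - f v) ^ 2 - (u - v) ^ 2 * deriv f u * deriv f v‖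
        ≤ C * ‖u - v‖ ^ 4 := by
  classical
  rcases Set.eq_empty_or_nonempty K with hKe | hKne
  · exact ⟨1, one_pos, fun u hu => by simp [hKe] at hu⟩
  obtain ⟨r, hr, hrU⟩ := hK.exists_cthickening_subset_open hU hKU
  set T := Metric.cthickening r K with hT
  have hTc : IsCompact T := hK.cthickening
  have hKT : K ⊆ T := Metric.self_subset_cthickening K
  -- iterated derivatives
  let F : ℕ → ℂ → ℂ := fun k => deriv^[k] f
  have hF0 : F 0 = f := rfl
  have hFsucc : ∀ k, F (k + 1) = deriv (F k) := fun k =>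
    Function.iterate_succ_apply' deriv k f
  have hfdo : DifferentiableOn ℂ f U := fun z hz => (hf z hz).differentiableWithinAt
  have hfa : AnalyticOnNhd ℂ f U := hfdo.analyticOnNhd hU
  have hFa : ∀ k, AnalyticOnNhd ℂ (F k) U := by
    intro k
    induction k with
    | zero => exact hfa
    | succ n ih => rw [hFsucc]; exact ih.deriv
  have hFd : ∀ k, ∀ z ∈ U, HasDerivAt (F k) (F (k + 1) z) z := by
    intro k z hz
    rw [hFsucc]
    exact ((hFa k z hz).differentiableAt).hasDerivAt
  -- uniform bounds on T
  have hFc : ∀ k, ContinuousOn (F k) T := fun k => ((hFa k).continuousOn).mono hrU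
  choose M hM using fun k => hTc.exists_bound_of_continuousOn (hFc k)
  set N : ℕ → ℝ := fun k => max (M k) 1 with hN
  have hNpos : ∀ k, 0 < N k := fun k => lt_of_lt_of_le one_pos (le_max_right _ _)
  have hNb : ∀ k, ∀ z ∈ T, norm (F k z) ≤ N k := fun k z hz =>
    le_trans (hM k z hz) (le_max_left _ _)
  set D : ℝ := Metric.diam K with hD
  have hD0 : 0 ≤ D := Metric.diam_nonneg
  set B : ℝ := 6 * N 2 ^ 2 + 20 * N 1 * N 3 + 4 * N 0 * N 4 + 8 * r * N 4 * N 1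
      + r ^ 2 * N 5 * N 1 with hB
  have hBpos : 0 < B := by positivity
  set A : ℝ := 4 * N 0 ^ 2 + (D + 1) ^ 2 * N 1 ^ 2 with hA
  have hApos : 0 < A := by positivity
  set C : ℝ := max B (A / r ^ 4) + 1 with hC
  have hCpos : 0 < C := by positivity
  refine ⟨C, hCpos, fun u hu v hv => ?_⟩
  have huT : u ∈ T := hKT hu
  have hvT : v ∈ T := hKT hv
  have hvU : v ∈ U := hKU hv
  set ρ : ℝ := norm (u - v) with hρ
  have hρ0 : 0 ≤ ρ := norm_nonneg _
  have hderiv1 : deriv f = F 1 := (hFsucc 0).symm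
  by_cases hcase : ρ ≤ r
  · -- near-diagonal case: Taylor argument on closedBall v ρ
    set a : ℂ := F 1 v with ha
    set c : ℂ := f v with hc
    set s : Set ℂ := Metric.closedBall v ρ with hs
    have hsT : s ⊆ T := by
      refine (Metric.closedBall_subset_cthickening hv ρ).trans ?_
      exact Metric.cthickening_mono hcase K
    have hsU : s ⊆ U := hsT.trans hrU
    have hscv : Convex ℝ s := convex_closedBall v ρ
    have hvs : v ∈ s := Metric.mem_closedBall_self hρ0
    have hus : u ∈ s := by
      simp only [hs, Metric.mem_closedBall, Complex.dist_eq, hρ, le_refl]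
    have hdist : ∀ z ∈ s, norm (z - v) ≤ ρ := by
      intro z hz
      simpa [hs, Complex.dist_eq] using hz
    -- the functions
    set g0 : ℂ → ℂ := fun z => (f z - c) ^ 2 - (z - v) ^ 2 * F 1 z * a with hg0
    set g1 : ℂ → ℂ := fun z => 2 * (f z - c) * F 1 z - 2 * (z - v) * F 1 z * a
      - (z - v) ^ 2 * F 2 z * a with hg1
    set g2 : ℂ → ℂ := fun z => 2 * (F 1 z) ^ 2 + 2 * (f z - c) * F 2 z - 2 * F 1 z * a
      - 4 * (z - v) * F 2 z * a - (z - v) ^ 2 * F 3 z * a with hg2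
    set g3 : ℂ → ℂ := fun z => 6 * F 1 z * F 2 z + 2 * (f z - c) * F 3 z - 6 * F 2 z * a
      - 6 * (z - v) * F 3 z * a - (z - v) ^ 2 * F 4 z * a with hg3
    set g4 : ℂ → ℂ := fun z => 6 * (F 2 z) ^ 2 + 8 * F 1 z * F 3 z + 2 * (f z - c) * F 4 z
      - 12 * F 3 z * a - 8 * (z - v) * F 4 z * a - (z - v) ^ 2 * F 5 z * a with hg4
    have hfz : ∀ z ∈ U, HasDerivAt f (F 1 z) z := by
      intro z hz; exact hFd 0 z hz
    have hid : ∀ z : ℂ, HasDerivAt (fun w : ℂ => w - v) 1 z := by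
      intro z; simpa using (hasDerivAt_id z).sub_const v
    -- derivative chain
    have hd0 : ∀ z ∈ U, HasDerivAt g0 (g1 z) z := by
      intro z hz
      have h1 : HasDerivAt (fun w => (f w - c) ^ 2) (2 * (f z - c) * F 1 z) z := by
        have := (((hfz z hz).sub_const c).pow 2)
        exact this.congr_deriv (by ring)
      have h2 : HasDerivAt (fun w => (w - v) ^ 2 * F 1 w * a)
          ((2 * (z - v) * F 1 z + (z - v) ^ 2 * F 2 z) * a) z := by
        have hp : HasDerivAt (fun w : ℂ => (w - v) ^ 2) (2 * (z - v)) z := by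
          have := (hid z).pow 2
          exact this.congr_deriv (by ring)
        exact ((hp.mul (hFd 1 z hz)).mul_const a)
      have := h1.sub h2
      exact this.congr_deriv (by simp only [hg1]; ring)
    have hd1 : ∀ z ∈ U, HasDerivAt g1 (g2 z) z := by
      intro z hz
      have h1 : HasDerivAt (fun w => 2 * (f w - c) * F 1 w)
          (2 * F 1 z * F 1 z + 2 * (f z - c) * F 2 z) z := by
        have := (((hfz z hz).sub_const c).const_mul 2).mul (hFd 1 z hz)
        exact this.congr_deriv (by ring)
      have h2 : HasDerivAt (fun w => 2 * (w - v) * F 1 w * a)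
          ((2 * F 1 z + 2 * (z - v) * F 2 z) * a) z := by
        have hp : HasDerivAt (fun w : ℂ => 2 * (w - v)) 2 z := by
          simpa using (hid z).const_mul 2
        have := (hp.mul (hFd 1 z hz)).mul_const a
        exact this.congr_deriv (by ring)
      have h3 : HasDerivAt (fun w => (w - v) ^ 2 * F 2 w * a)
          ((2 * (z - v) * F 2 z + (z - v) ^ 2 * F 3 z) * a) z := by
        have hp : HasDerivAt (fun w : ℂ => (w - v) ^ 2) (2 * (z - v)) z := by
          have := (hid z).pow 2
          exact this.congr_deriv (by ring)
        exact (hp.mul (hFd 2 z hz)).mul_const a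
      have := (h1.sub h2).sub h3
      exact this.congr_deriv (by simp only [hg2]; ring)
    have hd2 : ∀ z ∈ U, HasDerivAt g2 (g3 z) z := by
      intro z hz
      have h1 : HasDerivAt (fun w => 2 * (F 1 w) ^ 2) (4 * F 1 z * F 2 z) z := by
        have := ((hFd 1 z hz).pow 2).const_mul 2
        exact this.congr_deriv (by ring)
      have h2 : HasDerivAt (fun w => 2 * (f w - c) * F 2 w)
          (2 * F 1 z * F 2 z + 2 * (f z - c) * F 3 z) z := by
        have := (((hfz z hz).sub_const c).const_mul 2).mul (hFd 2 z hz)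
        exact this.congr_deriv (by ring)
      have h3 : HasDerivAt (fun w => 2 * F 1 w * a) (2 * F 2 z * a) z := by
        have := ((hFd 1 z hz).const_mul 2).mul_const a
        exact this.congr_deriv (by ring)
      have h4 : HasDerivAt (fun w => 4 * (w - v) * F 2 w * a)
          ((4 * F 2 z + 4 * (z - v) * F 3 z) * a) z := by
        have hp : HasDerivAt (fun w : ℂ => 4 * (w - v)) 4 z := by
          simpa using (hid z).const_mul 4
        have := (hp.mul (hFd 2 z hz)).mul_const a
        exact this.congr_deriv (by ring)
      have h5 : HasDerivAt (fun w => (w - v) ^ 2 * F 3 w * a)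
          ((2 * (z - v) * F 3 z + (z - v) ^ 2 * F 4 z) * a) z := by
        have hp : HasDerivAt (fun w : ℂ => (w - v) ^ 2) (2 * (z - v)) z := by
          have := (hid z).pow 2
          exact this.congr_deriv (by ring)
        exact (hp.mul (hFd 3 z hz)).mul_const a
      have := (((h1.add h2).sub h3).sub h4).sub h5
      exact this.congr_deriv (by simp only [hg3]; ring)
    have hd3 : ∀ z ∈ U, HasDerivAt g3 (g4 z) z := by
      intro z hz
      have h1 : HasDerivAt (fun w => 6 * F 1 w * F 2 w)
          (6 * F 2 z * F 2 z + 6 * F 1 z * F 3 z) z := by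
        have := ((hFd 1 z hz).const_mul 6).mul (hFd 2 z hz)
        exact this.congr_deriv (by ring)
      have h2 : HasDerivAt (fun w => 2 * (f w - c) * F 3 w)
          (2 * F 1 z * F 3 z + 2 * (f z - c) * F 4 z) z := by
        have := (((hfz z hz).sub_const c).const_mul 2).mul (hFd 3 z hz)
        exact this.congr_deriv (by ring)
      have h3 : HasDerivAt (fun w => 6 * F 2 w * a) (6 * F 3 z * a) z := by
        have := ((hFd 2 z hz).const_mul 6).mul_const a
        exact this.congr_deriv (by ring)
      have h4 : HasDerivAt (fun w => 6 * (w - v) * F 3 w * a)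
          ((6 * F 3 z + 6 * (z - v) * F 4 z) * a) z := by
        have hp : HasDerivAt (fun w : ℂ => 6 * (w - v)) 6 z := by
          simpa using (hid z).const_mul 6
        have := (hp.mul (hFd 3 z hz)).mul_const a
        exact this.congr_deriv (by ring)
      have h5 : HasDerivAt (fun w => (w - v) ^ 2 * F 4 w * a)
          ((2 * (z - v) * F 4 z + (z - v) ^ 2 * F 5 z) * a) z := by
        have hp : HasDerivAt (fun w : ℂ => (w - v) ^ 2) (2 * (z - v)) z := by
          have := (hid z).pow 2
          exact this.congr_deriv (by ring)
        exact (hp.mul (hFd 4 z hz)).mul_const a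
      have := (((h1.add h2).sub h3).sub h4).sub h5
      exact this.congr_deriv (by simp only [hg4]; ring)
    -- vanishing at v
    have hz0 : g0 v = 0 := by simp [hg0, hc]
    have hz1 : g1 v = 0 := by simp [hg1, hc]
    have hz2 : g2 v = 0 := by simp only [hg2, hc, ha]; ring
    have hz3 : g3 v = 0 := by simp only [hg3, hc, ha]; ring
    -- bound on g4 over s
    have haN : norm a ≤ N 1 := hNb 1 v hvT
    have hcN : norm c ≤ N 0 := hNb 0 v hvT
    have hb4 : ∀ z ∈ s, norm (g4 z) ≤ B := by
      intro z hz
      have hzT : z ∈ T := hsT hz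
      have h2 := hNb 2 z hzT
      have h1 := hNb 1 z hzT
      have h3 := hNb 3 z hzT
      have h4 := hNb 4 z hzT
      have h5 := hNb 5 z hzT
      have h0 := hNb 0 z hzT
      have hzv : norm (z - v) ≤ r := le_trans (hdist z hz) hcase
      have hfc : norm (f z - c) ≤ 2 * N 0 := by
        calc norm (f z - c) ≤ norm (f z) + norm c :=
              norm_sub_le _ _
          _ ≤ N 0 + N 0 := add_le_add h0 hcN
          _ = 2 * N 0 := by ring
      have hmul : ∀ (x y : ℂ) (p q : ℝ), norm x ≤ p → norm y ≤ q →
          norm (x * y) ≤ p * q := by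
        intro x y p q hx hy
        rw [norm_mul]
        exact mul_le_mul hx hy (norm_nonneg _) (le_trans (norm_nonneg _) hx)
      have e1 : norm (6 * (F 2 z) ^ 2) ≤ 6 * N 2 ^ 2 :=
        hmul _ _ _ _ (by norm_num) (by
          rw [norm_pow]; exact pow_le_pow_left₀ (norm_nonneg _) h2 2)
      have e2 : norm (8 * F 1 z * F 3 z) ≤ 8 * N 1 * N 3 :=
        hmul _ _ _ _ (hmul _ _ _ _ (by norm_num) h1) h3
      have e3 : norm (2 * (f z - c) * F 4 z) ≤ 2 * (2 * N 0) * N 4 :=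
        hmul _ _ _ _ (hmul _ _ _ _ (by norm_num) hfc) h4
      have e4 : norm (12 * F 3 z * a) ≤ 12 * N 3 * N 1 :=
        hmul _ _ _ _ (hmul _ _ _ _ (by norm_num) h3) haN
      have e5 : norm (8 * (z - v) * F 4 z * a) ≤ 8 * r * N 4 * N 1 :=
        hmul _ _ _ _ (hmul _ _ _ _ (hmul _ _ _ _ (by norm_num) hzv) h4) haN
      have e6 : norm ((z - v) ^ 2 * F 5 z * a) ≤ r ^ 2 * N 5 * N 1 :=
        hmul _ _ _ _ (hmul _ _ _ _ (by
          rw [norm_pow]; exact pow_le_pow_left₀ (norm_nonneg _) hzv 2) h5) haN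
      simp only [hg4]
      calc norm (6 * (F 2 z) ^ 2 + 8 * F 1 z * F 3 z + 2 * (f z - c) * F 4 z
            - 12 * F 3 z * a - 8 * (z - v) * F 4 z * a - (z - v) ^ 2 * F 5 z * a)
          ≤ norm (6 * (F 2 z) ^ 2) + norm (8 * F 1 z * F 3 z)
            + norm (2 * (f z - c) * F 4 z) + norm (12 * F 3 z * a)
            + norm (8 * (z - v) * F 4 z * a) + norm ((z - v) ^ 2 * F 5 z * a) := by
            refine le_trans (norm_sub_le _ _) ?_
            gcongr
            refine le_trans (norm_sub_le _ _) ?_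
            gcongr
            refine le_trans (norm_sub_le _ _) ?_
            gcongr
            refine le_trans (norm_add_le _ _) ?_
            gcongr
            exact norm_add_le _ _
        _ ≤ B := by rw [hB]; linarith [e1, e2, e3, e4, e5, e6]
    -- chain of mean value bounds
    have mvt : ∀ (g g' : ℂ → ℂ) (Cb : ℝ), (∀ z ∈ U, HasDerivAt g (g' z) z) →
        (∀ z ∈ s, norm (g' z) ≤ Cb) → g v = 0 →
        ∀ z ∈ s, norm (g z) ≤ Cb * ρ := by
      intro g g' Cb hder hbd hzero z hz
      have h := hscv.norm_image_sub_le_of_norm_hasDerivWithin_le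
        (fun x hx => (hder x (hsU hx)).hasDerivWithinAt) hbd hvs hz
      rw [hzero, sub_zero] at h
      have hCb : 0 ≤ Cb := le_trans (norm_nonneg _) (hbd v hvs)
      calc norm (g z) = ‖g z‖ := rfl
        _ ≤ Cb * ‖z - v‖ := h
        _ ≤ Cb * ρ := by
            have : ‖z - v‖ ≤ ρ := hdist z hz
            exact mul_le_mul_of_nonneg_left this hCb
    have hb3 : ∀ z ∈ s, norm (g3 z) ≤ B * ρ := mvt g3 g4 B hd3 hb4 hz3
    have hb2 : ∀ z ∈ s, norm (g2 z) ≤ B * ρ * ρ := mvt g2 g3 (B * ρ) hd2 hb3 hz2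
    have hb1 : ∀ z ∈ s, norm (g1 z) ≤ B * ρ * ρ * ρ := mvt g1 g2 (B * ρ * ρ) hd1 hb2 hz1
    have hb0 : norm (g0 u) ≤ B * ρ * ρ * ρ * ρ :=
      mvt g0 g1 (B * ρ * ρ * ρ) hd0 hb1 hz0 u hus
    have hfinal : norm ((f u - f v) ^ 2 - (u - v) ^ 2 * deriv f u * deriv f v)
        = norm (g0 u) := by
      rw [hg0]
      simp only [hderiv1, hc, ha]
    rw [hfinal]
    calc norm (g0 u) ≤ B * ρ * ρ * ρ * ρ := hb0
      _ = B * ρ ^ 4 := by ring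
      _ ≤ C * ρ ^ 4 := by
          have : B ≤ C := le_trans (le_max_left _ _) (by rw [hC]; linarith)
          exact mul_le_mul_of_nonneg_right this (by positivity)
  · -- far case: ρ > r
    push_neg at hcase
    have hbound : norm ((f u - f v) ^ 2 - (u - v) ^ 2 * deriv f u * deriv f v) ≤ A := by
      have h0u : norm (f u) ≤ N 0 := hNb 0 u huT
      have h0v : norm (f v) ≤ N 0 := hNb 0 v hvT
      have h1u : norm (deriv f u) ≤ N 1 := by rw [hderiv1]; exact hNb 1 u huT
      have h1v : norm (deriv f v) ≤ N 1 := by rw [hderiv1]; exact hNb 1 v hvT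
      have huv : norm (u - v) ≤ D + 1 := by
        have : dist u v ≤ D := Metric.dist_le_diam_of_mem hK.isBounded hu hv
        rw [Complex.dist_eq] at this
        linarith
      calc norm ((f u - f v) ^ 2 - (u - v) ^ 2 * deriv f u * deriv f v)
          ≤ norm ((f u - f v) ^ 2)
            + norm ((u - v) ^ 2 * deriv f u * deriv f v) := norm_sub_le _ _
        _ ≤ (2 * N 0) ^ 2 + (D + 1) ^ 2 * N 1 * N 1 := by
            have hmul2 : ∀ (x y : ℂ) (p q : ℝ), norm x ≤ p → norm y ≤ q →
                norm (x * y) ≤ p * q := by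
              intro x y p q hx hy
              rw [norm_mul]
              exact mul_le_mul hx hy (norm_nonneg _) (le_trans (norm_nonneg _) hx)
            have e1 : norm ((f u - f v) ^ 2) ≤ (2 * N 0) ^ 2 := by
              rw [norm_pow]
              exact pow_le_pow_left₀ (norm_nonneg _)
                (le_trans (norm_sub_le _ _) (by linarith)) 2
            have e2 : norm ((u - v) ^ 2 * deriv f u * deriv f v)
                ≤ (D + 1) ^ 2 * N 1 * N 1 :=
              hmul2 _ _ _ _ (hmul2 _ _ _ _ (by
                rw [norm_pow]
                exact pow_le_pow_left₀ (norm_nonneg _) huv 2) h1u) h1v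
            linarith
        _ ≤ A := by rw [hA]; nlinarith [hNpos 1]
    have hρr : r < ρ := hcase
    have hr4 : r ^ 4 < ρ ^ 4 :=
      pow_lt_pow_left₀ hρr hr.le (by norm_num)
    calc norm ((f u - f v) ^ 2 - (u - v) ^ 2 * deriv f u * deriv f v)
        ≤ A := hbound
      _ = (A / r ^ 4) * r ^ 4 := by field_simp
      _ ≤ (A / r ^ 4) * ρ ^ 4 := by
          have : 0 ≤ A / r ^ 4 := by positivity
          exact mul_le_mul_of_nonneg_left hr4.le this
      _ ≤ C * ρ ^ 4 := by
          have : A / r ^ 4 ≤ C := le_trans (le_max_right _ _) (by rw [hC]; linarith)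
          exact mul_le_mul_of_nonneg_right this (by positivity)
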